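/- Let n ≥ 1, 1 ≤ k ≤ n, and let N_1 ∪ N_2 ∪ ⋯ ∪ N_k = {1,…,n} be a decomposition of {1,…,n} into an ordered union of k pairwise disjoint nonempty blocks. Then the set T = {A = (a_{i,j}) ∈ Ω_n : (a_{i,j} ≠ 0 and i ∈ N_p and j ∈ N_q) ⇒ p < q} is a maximal element of Nil_k(Ω_n), and its nilpotency class equals k. -/

import Mathlib

namespace NilSg

variable {M : Type*}

/-- `T ⊆ M` is closed under multiplication. -/
def IsSubsg [Mul M] (T : Set M) : Prop :=
  ∀ ⦃a⦄, a ∈ T → ∀ ⦃b⦄, b ∈ T → a * b ∈ T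

/-- Every product of exactly `k` elements of `T` equals `z`
(such products are the products of nonempty lists `a :: l` of elements of `T`). -/
def ProdEq [Mul M] (z : M) (T : Set M) (k : ℕ) : Prop :=
  ∀ (a : M) (l : List M), a ∈ T → (∀ x ∈ l, x ∈ T) → l.length + 1 = k →
    l.foldl (· * ·) a = z

/-- `T` is a nilpotent subsemigroup with respect to the zero element `z`. -/
def IsNilSubsg [Mul M] (z : M) (T : Set M) : Prop :=
  IsSubsg T ∧ ∃ k, 0 < k ∧ ProdEq z T k

/-- The nilpotency class of `T`: the minimal `k ≥ 1` such that every product of `k`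
elements of `T` equals `z`. -/
noncomputable def nilClass [Mul M] (z : M) (T : Set M) : ℕ :=
  sInf {k | 0 < k ∧ ProdEq z T k}

/-- `T` is a nilpotent subsemigroup of `S` (with zero `z`). -/
def NilIn [Mul M] (z : M) (S : Set M) (T : Set M) : Prop :=
  T ⊆ S ∧ IsNilSubsg z T

/-- `T` is a nilpotent subsemigroup of `S` (with zero `z`) of nilpotency class at most `k`. -/
def NilLe [Mul M] (z : M) (S : Set M) (k : ℕ) (T : Set M) : Prop :=
  T ⊆ S ∧ IsNilSubsg z T ∧ nilClass z T ≤ k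

/-- `Ω n`: the semigroup of `n × n` real matrices with nonnegative entries. -/
def Omega (n : ℕ) : Set (Matrix (Fin n) (Fin n) ℝ) :=
  {A | ∀ i j, 0 ≤ A i j}

/-- `Q n`: the semigroup of `n × n` real matrices all of whose row sums and
column sums equal `1`. -/
def Qset (n : ℕ) : Set (Matrix (Fin n) (Fin n) ℝ) :=
  {A | (∀ i, ∑ j, A i j = 1) ∧ (∀ j, ∑ i, A i j = 1)}

/-- `D n`: the semigroup of `n × n` doubly stochastic real matrices. -/
def Dset (n : ℕ) : Set (Matrix (Fin n) (Fin n) ℝ) :=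
  {A | (∀ i j, 0 ≤ A i j) ∧ (∀ i, ∑ j, A i j = 1) ∧ (∀ j, ∑ i, A i j = 1)}

/-- The matrix all of whose entries equal `1/n`: the zero element of `Q n` and `D n`. -/
noncomputable def On (n : ℕ) : Matrix (Fin n) (Fin n) ℝ :=
  Matrix.of fun _ _ => (n : ℝ)⁻¹

/-- The hyperplane `V` of all vectors whose coordinates sum to `0`. -/
def Vsub (n : ℕ) : Submodule ℝ (Fin n → ℝ) where
  carrier := {x | ∑ i, x i = 0}
  add_mem' := by
    intro a b ha hb
    simp only [Set.mem_setOf_eq, Pi.add_apply] at *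
    simp [Finset.sum_add_distrib, ha, hb]
  zero_mem' := by simp
  smul_mem' := by
    intro c x hx
    simp only [Set.mem_setOf_eq, Pi.smul_apply, smul_eq_mul] at *
    simp [← Finset.mul_sum, hx]

/-- elementary matrix with a single 1 entry -/
def Em (n : ℕ) (u v : Fin n) : Matrix (Fin n) (Fin n) ℝ :=
  Matrix.of fun a b => if a = u ∧ b = v then 1 else 0

lemma Em_mem_Omega (n : ℕ) (u v : Fin n) : Em n u v ∈ Omega n := by
  intro i j
  unfold Em
  simp only [Matrix.of_apply]
  split <;> norm_num

lemma Em_entry_self (n : ℕ) (u v : Fin n) : Em n u v u v = 1 := by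
  simp [Em]

lemma Em_entry_ne (n : ℕ) (u v i j : Fin n) (h : Em n u v i j ≠ 0) : i = u ∧ j = v := by
  by_contra hc
  simp [Em, hc] at h

lemma mul_mem_Omega {n : ℕ} {A B : Matrix (Fin n) (Fin n) ℝ}
    (hA : A ∈ Omega n) (hB : B ∈ Omega n) : A * B ∈ Omega n := by
  intro i j
  rw [Matrix.mul_apply]
  exact Finset.sum_nonneg fun l _ => mul_nonneg (hA i l) (hB l j)

lemma mul_entry_pos {n : ℕ} {A B : Matrix (Fin n) (Fin n) ℝ}
    (hA : A ∈ Omega n) (hB : B ∈ Omega n) {i l j : Fin n}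
    (h1 : 0 < A i l) (h2 : 0 < B l j) : 0 < (A * B) i j := by
  rw [Matrix.mul_apply]
  exact Finset.sum_pos' (fun t _ => mul_nonneg (hA i t) (hB t j))
    ⟨l, Finset.mem_univ l, mul_pos h1 h2⟩

lemma mul_entry_ne_zero {n : ℕ} {A B : Matrix (Fin n) (Fin n) ℝ} {i j : Fin n}
    (h : (A * B) i j ≠ 0) : ∃ l, A i l ≠ 0 ∧ B l j ≠ 0 := by
  rw [Matrix.mul_apply] at h
  obtain ⟨l, _, hl⟩ := Finset.exists_ne_zero_of_sum_ne_zero h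
  exact ⟨l, left_ne_zero_of_mul hl, right_ne_zero_of_mul hl⟩

lemma foldl_zero {n : ℕ} (l : List (Matrix (Fin n) (Fin n) ℝ)) :
    l.foldl (· * ·) 0 = 0 := by
  induction l with
  | nil => rfl
  | cons x l ih => simpa [zero_mul] using ih

lemma prodEq_mono {n : ℕ} {S : Set (Matrix (Fin n) (Fin n) ℝ)} {m K : ℕ}
    (hm : 0 < m) (hmK : m ≤ K) (h : ProdEq 0 S m) : ProdEq 0 S K := by
  intro a l ha hl hlen
  have htd := List.take_append_drop (m - 1) l
  have hlt : (l.take (m-1)).length = m - 1 := by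
    rw [List.length_take]; omega
  have h1 : (l.take (m-1)).foldl (· * ·) a = 0 :=
    h a _ ha (fun x hx => hl x (List.mem_of_mem_take hx)) (by omega)
  calc l.foldl (· * ·) a = ((l.take (m-1)) ++ (l.drop (m-1))).foldl (· * ·) a := by rw [htd]
    _ = (l.drop (m-1)).foldl (· * ·) ((l.take (m-1)).foldl (· * ·) a) := List.foldl_append ..
    _ = 0 := by rw [h1]; exact foldl_zero _

/-- Path lemma: a chain of matrices with positive entries along a path has
nonzero product. -/
lemma path_lemma {n : ℕ} (v : ℕ → Fin n) (Mf : ℕ → Matrix (Fin n) (Fin n) ℝ) :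
    ∀ m, 0 < m → (∀ t, t < m → Mf t ∈ Omega n) →
    (∀ t, t < m → 0 < Mf t (v t) (v (t+1))) →
    ∃ l : List (Matrix (Fin n) (Fin n) ℝ), l.length + 1 = m ∧
      (∀ x ∈ l, ∃ t, t < m ∧ x = Mf t) ∧
      l.foldl (· * ·) (Mf 0) ∈ Omega n ∧
      0 < l.foldl (· * ·) (Mf 0) (v 0) (v m) := by
  intro m
  induction m with
  | zero => omega
  | succ m ih =>
    intro _ hΩ hpos
    rcases Nat.eq_zero_or_pos m with rfl | hm
    · exact ⟨[], rfl, by simp, hΩ 0 (by omega), hpos 0 (by omega)⟩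
    · obtain ⟨l, hlen, hmem, hΩ', hpos'⟩ := ih hm (fun t ht => hΩ t (by omega))
        (fun t ht => hpos t (by omega))
      refine ⟨l ++ [Mf m], by simp [hlen], ?_, ?_, ?_⟩
      · intro x hx
        rcases List.mem_append.mp hx with h | h
        · obtain ⟨t, ht, rfl⟩ := hmem x h
          exact ⟨t, by omega, rfl⟩
        · exact ⟨m, by omega, by simpa using h⟩
      · rw [List.foldl_append]
        exact mul_mem_Omega hΩ' (hΩ m (by omega))
      · rw [List.foldl_append]
        simp only [List.foldl_cons, List.foldl_nil]
        exact mul_entry_pos hΩ' (hΩ m (by omega)) hpos' (hpos m (by omega))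

/-- `Gap c s A`: `A` is nonnegative and each nonzero entry jumps at least `s` blocks. -/
def Gap {n k : ℕ} (c : Fin n → Fin k) (s : ℕ) (A : Matrix (Fin n) (Fin n) ℝ) : Prop :=
  A ∈ Omega n ∧ ∀ i j, A i j ≠ 0 → (c i : ℕ) + s ≤ (c j : ℕ)

lemma gap_mul {n k : ℕ} {c : Fin n → Fin k} {s : ℕ}
    {A B : Matrix (Fin n) (Fin n) ℝ} (hA : Gap c s A) (hB : Gap c 1 B) :
    Gap c (s+1) (A * B) := by
  refine ⟨mul_mem_Omega hA.1 hB.1, fun i j h => ?_⟩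
  obtain ⟨l, h1, h2⟩ := mul_entry_ne_zero h
  have := hA.2 i l h1
  have := hB.2 l j h2
  omega

lemma gap_foldl {n k : ℕ} {c : Fin n → Fin k} :
    ∀ (l : List (Matrix (Fin n) (Fin n) ℝ)) (a : Matrix (Fin n) (Fin n) ℝ) (s : ℕ),
      Gap c s a → (∀ x ∈ l, Gap c 1 x) → Gap c (s + l.length) (l.foldl (· * ·) a) := by
  intro l
  induction l with
  | nil => intro a s ha _; simpa using ha
  | cons x l ih =>
    intro a s ha hl
    have h1 : Gap c (s+1) (a * x) := gap_mul ha (hl x List.mem_cons_self)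
    have := ih (a * x) (s+1) h1 (fun y hy => hl y (List.mem_cons_of_mem x hy))
    simp only [List.foldl_cons, List.length_cons]
    have heq : s + (l.length + 1) = s + 1 + l.length := by omega
    rw [heq]
    exact this

/-- path vertex sequence used for counterexamples -/
def pv {n k : ℕ} (g : Fin k → Fin n) (i j : Fin n) (p q : ℕ) (hpk : p < k) : ℕ → Fin n :=
  fun t =>
    if h : t < p then g ⟨t, h.trans hpk⟩
    else if t = p then i
    else if t = p + 1 then j
    else g ⟨min (q + t - (p + 1)) (k - 1), by
      have h1 := Nat.min_le_right (q + t - (p + 1)) (k - 1); omega⟩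

lemma pv_lt {n k : ℕ} (g : Fin k → Fin n) (i j : Fin n) (p q : ℕ) (hpk : p < k)
    {t : ℕ} (h : t < p) : pv g i j p q hpk t = g ⟨t, h.trans hpk⟩ := by
  simp [pv, h]

lemma pv_p {n k : ℕ} (g : Fin k → Fin n) (i j : Fin n) (p q : ℕ) (hpk : p < k) :
    pv g i j p q hpk p = i := by simp [pv]

lemma pv_p1 {n k : ℕ} (g : Fin k → Fin n) (i j : Fin n) (p q : ℕ) (hpk : p < k) :
    pv g i j p q hpk (p+1) = j := by
  have h1 : ¬ (p+1 < p) := by omega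
  have h2 : ¬ (p+1 = p) := by omega
  simp [pv, h1, h2]

lemma pv_big {n k : ℕ} (g : Fin k → Fin n) (i j : Fin n) (p q : ℕ) (hpk : p < k)
    {t : ℕ} (h : p + 1 < t) :
    pv g i j p q hpk t = g ⟨min (q + t - (p + 1)) (k - 1), by
      have h1 := Nat.min_le_right (q + t - (p + 1)) (k - 1); omega⟩ := by
  have h1 : ¬ (t < p) := by omega
  have h2 : ¬ (t = p) := by omega
  have h3 : ¬ (t = p + 1) := by omega
  simp [pv, h1, h2, h3]


lemma key_lower {n k : ℕ} (hk1 : 1 ≤ k) (c : Fin n → Fin k) (g : Fin k → Fin n)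
    (hg : ∀ x, c (g x) = x) {m : ℕ} (hm : 0 < m) (hmk : m < k) :
    ¬ ProdEq (0 : Matrix (Fin n) (Fin n) ℝ)
      {A | A ∈ Omega n ∧ ∀ i j, A i j ≠ 0 → c i < c j} m := by
  intro hP
  have hkm : ∀ t : ℕ, min t (k-1) < k := fun t => by
    have := Nat.min_le_right t (k-1); omega
  set v : ℕ → Fin n := fun t => g ⟨min t (k-1), hkm t⟩ with hv
  set Mf : ℕ → Matrix (Fin n) (Fin n) ℝ := fun t => Em n (v t) (v (t+1)) with hMf
  have hmemT : ∀ t, t < m →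
      Mf t ∈ {A | A ∈ Omega n ∧ ∀ i j, A i j ≠ 0 → c i < c j} := by
    intro t ht
    refine ⟨by rw [hMf]; exact Em_mem_Omega n _ _, fun a b hab => ?_⟩
    rw [hMf] at hab
    obtain ⟨rfl, rfl⟩ := Em_entry_ne n _ _ _ _ hab
    rw [hv]
    simp only [hg]
    rw [Fin.lt_def]
    simp only
    omega
  obtain ⟨l, hlen, hmem, hΩl, hpos⟩ := path_lemma v Mf m hm
    (fun t ht => (hmemT t ht).1)
    (fun t ht => by rw [hMf]; simp only; rw [Em_entry_self]; norm_num)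
  have h0 := hP (Mf 0) l (hmemT 0 hm)
    (fun x hx => by obtain ⟨t, ht, rfl⟩ := hmem x hx; exact hmemT t ht) hlen
  rw [h0] at hpos
  simp at hpos

lemma key_maximal {n k : ℕ} (hk1 : 1 ≤ k) (c : Fin n → Fin k) (g : Fin k → Fin n)
    (hg : ∀ x, c (g x) = x) {T' : Set (Matrix (Fin n) (Fin n) ℝ)} (hΩ' : T' ⊆ Omega n)
    (hEm : ∀ u w : Fin n, c u < c w → Em n u w ∈ T')
    (hP : ProdEq (0 : Matrix (Fin n) (Fin n) ℝ) T' k)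
    {B : Matrix (Fin n) (Fin n) ℝ} (hB : B ∈ T') {i j : Fin n} (hBij : B i j ≠ 0) :
    c i < c j := by
  by_contra hlt
  have hqp : (c j : ℕ) ≤ (c i : ℕ) := by
    have := Fin.not_lt.mp hlt
    exact Fin.le_def.mp this
  set p := (c i : ℕ) with hpdef
  set q := (c j : ℕ) with hqdef
  have hpk : p < k := (c i).isLt
  have hqk : q < k := (c j).isLt
  set v := pv g i j p q hpk with hv
  set Mf : ℕ → Matrix (Fin n) (Fin n) ℝ :=
    fun t => if t = p then B else Em n (v t) (v (t+1)) with hMf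
  have hedge : ∀ t, t < k → t ≠ p → c (v t) < c (v (t+1)) := by
    intro t htk htp
    rcases lt_or_gt_of_ne htp with h | h
    · rw [hv, pv_lt g i j p q hpk h, hg]
      rcases Nat.lt_or_ge (t+1) p with h2 | h2
      · rw [pv_lt g i j p q hpk h2, hg, Fin.lt_def]; simp only; omega
      · have ht1 : t + 1 = p := by omega
        rw [ht1, pv_p, Fin.lt_def]
        simp only
        omega
    · rcases Nat.lt_or_ge (p+1) t with h2 | h2
      · -- t ≥ p+2
        rw [hv, pv_big g i j p q hpk h2, pv_big g i j p q hpk (by omega : p+1 < t+1),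
          hg, hg, Fin.lt_def]
        simp only
        rw [Nat.min_eq_left (by omega), Nat.min_eq_left (by omega)]
        omega
      · have ht1 : t = p + 1 := by omega
        subst ht1
        rw [hv, pv_p1, pv_big g i j p q hpk (by omega), hg, Fin.lt_def]
        simp only
        rw [Nat.min_eq_left (by omega)]
        omega
  have hmemT : ∀ t, t < k → Mf t ∈ T' := by
    intro t ht
    rw [hMf]
    by_cases htp : t = p
    · simp only [htp, if_pos rfl]; exact hB
    · simp only [if_neg htp]; exact hEm _ _ (hedge t ht htp)
  obtain ⟨l, hlen, hmem, hΩl, hpos⟩ := path_lemma v Mf k (by omega)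
    (fun t ht => hΩ' (hmemT t ht))
    (by
      intro t ht
      rw [hMf]
      by_cases htp : t = p
      · simp only [htp, if_pos rfl]
        rw [hv, pv_p, pv_p1]
        exact lt_of_le_of_ne (hΩ' hB i j) (Ne.symm hBij)
      · simp only [if_neg htp]
        rw [Em_entry_self]
        norm_num)
  have h0 := hP (Mf 0) l (hmemT 0 (by omega))
    (fun x hx => by obtain ⟨t, ht, rfl⟩ := hmem x hx; exact hmemT t ht) hlen
  rw [h0] at hpos
  simp at hpos

/-- For an ordered decomposition of `{1,…,n}` into `k` pairwise
disjoint nonempty blocks `N_1 ∪ … ∪ N_k` (encoded by the surjection `c`, with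
`N_p = c⁻¹(p)`), the set `T = {A ∈ Ω_n : A i j ≠ 0 → c i < c j}` is a maximal
element of `Nil_k(Ω_n)` and its nilpotency class equals `k`. -/
theorem stmt6 (n k : ℕ) (hn : 1 ≤ n) (hk1 : 1 ≤ k) (hkn : k ≤ n)
    (c : Fin n → Fin k) (hc : Function.Surjective c) :
    Maximal (NilLe (0 : Matrix (Fin n) (Fin n) ℝ) (Omega n) k)
        {A | A ∈ Omega n ∧ ∀ i j, A i j ≠ 0 → c i < c j} ∧
      nilClass (0 : Matrix (Fin n) (Fin n) ℝ)
        {A | A ∈ Omega n ∧ ∀ i j, A i j ≠ 0 → c i < c j} = k := by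
  classical
  obtain ⟨g, hg⟩ := hc.hasRightInverse
  set T : Set (Matrix (Fin n) (Fin n) ℝ) :=
    {A | A ∈ Omega n ∧ ∀ i j, A i j ≠ 0 → c i < c j} with hTdef
  have hTΩ : T ⊆ Omega n := fun A hA => hA.1
  have hsubsg : IsSubsg T := by
    intro a ha b hb
    refine ⟨mul_mem_Omega ha.1 hb.1, fun i j h => ?_⟩
    obtain ⟨l, h1, h2⟩ := mul_entry_ne_zero h
    exact lt_trans (ha.2 _ _ h1) (hb.2 _ _ h2)
  have hgap1 : ∀ x ∈ T, Gap c 1 x := by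
    intro x hx
    refine ⟨hx.1, fun i j h => ?_⟩
    have := hx.2 i j h
    rw [Fin.lt_def] at this
    omega
  have hPk : ProdEq (0 : Matrix (Fin n) (Fin n) ℝ) T k := by
    intro a l ha hl hlen
    have hgap := gap_foldl l a 1 (hgap1 a ha) (fun x hx => hgap1 x (hl x hx))
    ext i j
    by_contra h
    have h2 := hgap.2 i j h
    have h3 := (c j).isLt
    omega
  have hclass : nilClass (0 : Matrix (Fin n) (Fin n) ℝ) T = k := by
    have hmem : k ∈ {m | 0 < m ∧ ProdEq (0 : Matrix (Fin n) (Fin n) ℝ) T m} :=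
      ⟨by omega, hPk⟩
    have h1 := Nat.sInf_le hmem
    have h2 := Nat.sInf_mem (⟨k, hmem⟩ :
      {m | 0 < m ∧ ProdEq (0 : Matrix (Fin n) (Fin n) ℝ) T m}.Nonempty)
    rw [nilClass]
    rcases Nat.lt_or_ge (sInf {m | 0 < m ∧ ProdEq (0 : Matrix (Fin n) (Fin n) ℝ) T m}) k
      with hlt | hge
    · exact absurd h2.2 (key_lower hk1 c g hg h2.1 hlt)
    · omega
  refine ⟨⟨⟨hTΩ, ⟨hsubsg, k, by omega, hPk⟩, le_of_eq hclass⟩, ?_⟩, hclass⟩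
  intro T' hT' hsub B hB
  have hΩ' : T' ⊆ Omega n := hT'.1
  have hPk' : ProdEq (0 : Matrix (Fin n) (Fin n) ℝ) T' k := by
    obtain ⟨hsg', m0, hm0, hPm0⟩ := hT'.2.1
    have hne : {m | 0 < m ∧ ProdEq (0 : Matrix (Fin n) (Fin n) ℝ) T' m}.Nonempty :=
      ⟨m0, hm0, hPm0⟩
    have h2 := Nat.sInf_mem hne
    have h3 : nilClass (0 : Matrix (Fin n) (Fin n) ℝ) T' ≤ k := hT'.2.2
    rw [nilClass] at h3
    exact prodEq_mono h2.1 h3 h2.2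
  have hEm : ∀ u w : Fin n, c u < c w → Em n u w ∈ T' := by
    intro u w huw
    refine hsub ⟨Em_mem_Omega n u w, fun a b hab => ?_⟩
    obtain ⟨rfl, rfl⟩ := Em_entry_ne n u w a b hab
    exact huw
  exact ⟨hΩ' hB, fun i j h => key_maximal hk1 c g hg hΩ' hEm hPk' hB h⟩

end NilSg
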